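/- Since by Theorem (sorting by adjusted ecpm) any optimal assignment is sorted in decreasing adjusted ecpm, the maximum over all injective assignments of k slots equals the maximum of E over subsets S of bidders of size at most k, where each subset is listed in decreasing adjusted-ecpm order. -/

import Mathlib

noncomputable section

/-- Efficiency of an ordered list of ads `(e, q)`. -/
def eff : List (ℝ × ℝ) → ℝ
  | [] => 0
  | a :: L => a.1 + a.2 * eff L

/-- Product of continuation probabilities of a list of ads. -/
def qprod (L : List (ℝ × ℝ)) : ℝ := (L.map Prod.snd).prod

def aecpm (u : ℝ × ℝ) : ℝ := u.1 / (1 - u.2)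

def rge : (ℝ × ℝ) → (ℝ × ℝ) → Prop := fun u v => aecpm v ≤ aecpm u

noncomputable instance : DecidableRel rge := fun _ _ => Classical.dec _

instance : IsTotal (ℝ × ℝ) rge := ⟨fun a b => le_total (aecpm b) (aecpm a)⟩
instance : IsTrans (ℝ × ℝ) rge := ⟨fun _ _ _ h1 h2 => le_trans h2 h1⟩

lemma eff_cons (a : ℝ × ℝ) (L : List (ℝ × ℝ)) : eff (a :: L) = a.1 + a.2 * eff L := rfl

lemma eff_nonneg (l : List (ℝ × ℝ)) (h : ∀ a ∈ l, 0 ≤ a.1 ∧ 0 ≤ a.2) : 0 ≤ eff l := by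
  induction l with
  | nil => simp [eff]
  | cons a l ih =>
    have ha := h a (List.mem_cons_self)
    have hl := ih (fun b hb => h b (List.mem_cons_of_mem _ hb))
    have := mul_nonneg ha.2 hl
    simp only [eff_cons]; linarith [ha.1]

lemma eff_le_sum (l : List (ℝ × ℝ)) (h : ∀ a ∈ l, 0 ≤ a.1 ∧ 0 ≤ a.2 ∧ a.2 < 1) :
    eff l ≤ (l.map Prod.fst).sum := by
  induction l with
  | nil => simp [eff]
  | cons a l ih =>
    have ha := h a (List.mem_cons_self)
    have h' : ∀ b ∈ l, 0 ≤ b.1 ∧ 0 ≤ b.2 ∧ b.2 < 1 :=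
      fun b hb => h b (List.mem_cons_of_mem _ hb)
    have hl := ih h'
    have hnn : 0 ≤ eff l := eff_nonneg l (fun b hb => ⟨(h' b hb).1, (h' b hb).2.1⟩)
    have : a.2 * eff l ≤ eff l := by nlinarith [ha.2.1, ha.2.2]
    simp only [eff_cons, List.map_cons, List.sum_cons]
    linarith

lemma eff_cons_mono (a : ℝ × ℝ) (ha : 0 ≤ a.2) {l₁ l₂ : List (ℝ × ℝ)}
    (h : eff l₁ ≤ eff l₂) : eff (a :: l₁) ≤ eff (a :: l₂) := by
  simp only [eff_cons]; nlinarith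

lemma eff_swap (u v : ℝ × ℝ) (hu : u.2 < 1) (hv : v.2 < 1)
    (h : aecpm u ≤ aecpm v) (L : List (ℝ × ℝ)) :
    eff (u :: v :: L) ≤ eff (v :: u :: L) := by
  have hu' : 0 < 1 - u.2 := by linarith
  have hv' : 0 < 1 - v.2 := by linarith
  have := (div_le_div_iff₀ hu' hv').mp h
  simp only [eff_cons]
  nlinarith

lemma eff_orderedInsert (a : ℝ × ℝ) (ha : 0 ≤ a.2 ∧ a.2 < 1) (l : List (ℝ × ℝ))
    (hl : ∀ b ∈ l, 0 ≤ b.2 ∧ b.2 < 1) :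
    eff (a :: l) ≤ eff (List.orderedInsert rge a l) := by
  induction l with
  | nil => simp [List.orderedInsert]
  | cons b l ih =>
    rw [List.orderedInsert]
    by_cases h : rge a b
    · simp [h]
    · simp only [h, if_false]
      have hb := hl b (List.mem_cons_self)
      have h1 : aecpm a ≤ aecpm b := le_of_not_ge h
      calc eff (a :: b :: l) ≤ eff (b :: a :: l) := eff_swap a b ha.2 hb.2 h1 l
        _ ≤ eff (b :: List.orderedInsert rge a l) :=
          eff_cons_mono b hb.1 (ih (fun c hc => hl c (List.mem_cons_of_mem _ hc)))

lemma eff_le_insertionSort (l : List (ℝ × ℝ)) (hl : ∀ b ∈ l, 0 ≤ b.2 ∧ b.2 < 1) :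
    eff l ≤ eff (List.insertionSort rge l) := by
  induction l with
  | nil => simp
  | cons a l ih =>
    have ha := hl a (List.mem_cons_self)
    have hl' : ∀ b ∈ l, 0 ≤ b.2 ∧ b.2 < 1 := fun b hb => hl b (List.mem_cons_of_mem _ hb)
    have hmem : ∀ b ∈ List.insertionSort rge l, 0 ≤ b.2 ∧ b.2 < 1 := by
      intro b hb
      exact hl' b ((List.perm_insertionSort rge l).mem_iff.mp hb)
    calc eff (a :: l) ≤ eff (a :: List.insertionSort rge l) := eff_cons_mono a ha.1 (ih hl')
      _ ≤ _ := eff_orderedInsert a ha _ hmem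

theorem max_over_assignments_eq_max_over_sorted
    (C : Finset (ℝ × ℝ)) (k : ℕ)
    (hC : ∀ a ∈ C, 0 ≤ a.1 ∧ 0 ≤ a.2 ∧ a.2 < 1)
    (hdistinct : ∀ a ∈ C, ∀ b ∈ C, a.1 / (1 - a.2) = b.1 / (1 - b.2) → a = b) :
    sSup {x : ℝ | ∃ T : List (ℝ × ℝ), T.Nodup ∧ (∀ a ∈ T, a ∈ C) ∧
        T.length ≤ k ∧ eff T = x}
      = sSup {x : ℝ | ∃ T : List (ℝ × ℝ), T.Nodup ∧ (∀ a ∈ T, a ∈ C) ∧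
        T.length ≤ k ∧
        T.Pairwise (fun u v => u.1 / (1 - u.2) > v.1 / (1 - v.2)) ∧ eff T = x} := by
  set A := {x : ℝ | ∃ T : List (ℝ × ℝ), T.Nodup ∧ (∀ a ∈ T, a ∈ C) ∧
      T.length ≤ k ∧ eff T = x} with hA
  set B := {x : ℝ | ∃ T : List (ℝ × ℝ), T.Nodup ∧ (∀ a ∈ T, a ∈ C) ∧
      T.length ≤ k ∧
      T.Pairwise (fun u v => u.1 / (1 - u.2) > v.1 / (1 - v.2)) ∧ eff T = x} with hB
  have hBA : B ⊆ A := by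
    rintro x ⟨T, h1, h2, h3, _, h5⟩
    exact ⟨T, h1, h2, h3, h5⟩
  have hAbdd : BddAbove A := by
    refine ⟨∑ a ∈ C, a.1, ?_⟩
    rintro x ⟨T, hnd, hmem, _, rfl⟩
    have h1 : eff T ≤ (T.map Prod.fst).sum := eff_le_sum T (fun a ha => hC a (hmem a ha))
    have h2 : (T.map Prod.fst).sum = ∑ a ∈ T.toFinset, a.1 :=
      (List.sum_toFinset _ hnd).symm
    have h3 : ∑ a ∈ T.toFinset, a.1 ≤ ∑ a ∈ C, a.1 := by
      apply Finset.sum_le_sum_of_subset_of_nonneg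
      · intro a ha
        exact hmem a (List.mem_toFinset.mp ha)
      · intro a ha _
        exact (hC a ha).1
    linarith
  have hB0 : (0 : ℝ) ∈ B := ⟨[], by simp [eff]⟩
  have hA0 : (0 : ℝ) ∈ A := hBA hB0
  have hBbdd : BddAbove B := hAbdd.mono hBA
  apply le_antisymm
  · apply csSup_le ⟨0, hA0⟩
    rintro x ⟨T, hnd, hmem, hlen, rfl⟩
    set T' := List.insertionSort rge T with hT'
    have hperm : List.Perm T' T := List.perm_insertionSort rge T
    have hmem' : ∀ a ∈ T', a ∈ C := fun a ha => hmem a (hperm.mem_iff.mp ha)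
    have hnd' : T'.Nodup := hperm.nodup_iff.mpr hnd
    have hlen' : T'.length ≤ k := hperm.length_eq ▸ hlen
    have hsorted : T'.Pairwise rge := List.pairwise_insertionSort rge T
    have hsorted' : T'.Pairwise (fun u v => u.1 / (1 - u.2) > v.1 / (1 - v.2)) := by
      have hpw : T'.Pairwise (fun u v => u ≠ v ∧ rge u v) := hnd'.and hsorted
      refine hpw.imp_of_mem ?_
      intro u v hu hv ⟨hne, hle⟩
      rcases lt_or_eq_of_le hle with h | h
      · exact h
      · exact absurd (hdistinct v (hmem' v hv) u (hmem' u hu) h) (fun e => hne e.symm)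
    have heff : eff T ≤ eff T' :=
      eff_le_insertionSort T (fun b hb => ((hC b (hmem b hb)).2))
    calc eff T ≤ eff T' := heff
      _ ≤ sSup B := le_csSup hBbdd ⟨T', hnd', hmem', hlen', hsorted', rfl⟩
  · exact csSup_le_csSup hAbdd ⟨0, hB0⟩ hBA
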